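/- (Existence and uniqueness of the empirical M-estimator.) Let n ≥ 2 and let (p̂_ij)_{1≤i<j≤n} satisfy p̂_ij ∈ (0,1) for all i < j. Then the empirical objective 𝓛_n is convex on ℝⁿ and attains a unique minimizer over the centered hyperplane {θ ∈ ℝⁿ : θ₁ + ⋯ + θ_n = 0}. Moreover, if p̂_ij = σ(u_j − u_i) for some u ∈ ℝⁿ with u₁ + ⋯ + u_n = 0, then this unique minimizer equals u. -/

import Mathlib

/-- The logistic function `σ(t) = 1/(1+e^{-t})`. -/
noncomputable def logistic (t : ℝ) : ℝ := 1 / (1 + Real.exp (-t))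

/-- The empirical objective
`𝓛_n(θ) = Σ_{i<j} [-p̂_ij log σ(θ_j - θ_i) - (1 - p̂_ij) log σ(θ_i - θ_j)]`. -/
noncomputable def empObjective {n : ℕ} (phat : Fin n → Fin n → ℝ) (θ : Fin n → ℝ) : ℝ :=
  ∑ i : Fin n, ∑ j : Fin n,
    if i < j then
      -phat i j * Real.log (logistic (θ j - θ i))
        - (1 - phat i j) * Real.log (logistic (θ i - θ j))
    else 0

noncomputable def sp (t : ℝ) : ℝ := Real.log (1 + Real.exp (-t))

lemma one_add_exp_pos (t : ℝ) : 0 < 1 + Real.exp (-t) := by positivity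

lemma log_logistic (t : ℝ) : Real.log (logistic t) = -sp t := by
  unfold logistic sp
  rw [Real.log_div one_ne_zero (one_add_exp_pos t).ne', Real.log_one, zero_sub]

lemma sp_nonneg (t : ℝ) : 0 ≤ sp t :=
  Real.log_nonneg (le_add_of_nonneg_right (Real.exp_pos _).le)

lemma sp_neg (t : ℝ) : sp (-t) = t + sp t := by
  unfold sp
  have : 1 + Real.exp (- -t) = Real.exp t * (1 + Real.exp (-t)) := by
    rw [neg_neg, mul_add, mul_one, ← Real.exp_add, add_neg_cancel, Real.exp_zero, add_comm]
  rw [this, Real.log_mul (Real.exp_ne_zero t) (one_add_exp_pos t).ne', Real.log_exp]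

lemma sp_ge_neg (t : ℝ) : -t ≤ sp t := by
  have h := sp_nonneg (-t)
  rw [sp_neg] at h; linarith

lemma sp_hasDerivAt (t : ℝ) : HasDerivAt sp (-(1 / (Real.exp t + 1))) t := by
  have h1 : HasDerivAt (fun t : ℝ => 1 + Real.exp (-t)) (-Real.exp (-t)) t := by
    simpa using (HasDerivAt.const_add 1 (((hasDerivAt_neg t).exp)))
  have h2 := h1.log (one_add_exp_pos t).ne'
  show HasDerivAt (fun y => Real.log (1 + Real.exp (-y))) _ t
  convert h2 using 1
  rw [Real.exp_neg]
  have h3 := (Real.exp_pos t).ne'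
  field_simp

lemma sp_continuous : Continuous sp :=
  continuous_iff_continuousAt.2 fun t => (sp_hasDerivAt t).differentiableAt.continuousAt

lemma sp_strictConvexOn : StrictConvexOn ℝ Set.univ sp := by
  have hd : deriv sp = fun t => -(1 / (Real.exp t + 1)) :=
    funext fun t => (sp_hasDerivAt t).deriv
  refine StrictMono.strictConvexOn_univ_of_deriv sp_continuous ?_
  rw [hd]
  intro x y hxy
  have h1 : Real.exp x + 1 < Real.exp y + 1 := by
    have := Real.exp_lt_exp.2 hxy; linarith
  have h2 : (0:ℝ) < Real.exp x + 1 := by positivity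
  simp only [neg_lt_neg_iff]
  exact one_div_lt_one_div_of_lt h2 h1

lemma logistic_strictMono : StrictMono logistic := by
  intro x y hxy
  unfold logistic
  have h1 : 1 + Real.exp (-y) < 1 + Real.exp (-x) := by
    have := Real.exp_lt_exp.2 (neg_lt_neg hxy); linarith
  exact one_div_lt_one_div_of_lt (one_add_exp_pos y) h1

noncomputable def pairTerm (p d : ℝ) : ℝ := p * sp d + (1 - p) * sp (-d)

lemma pairTerm_eq (p d : ℝ) : pairTerm p d = sp d + (1 - p) * d := by
  unfold pairTerm; rw [sp_neg]; ring

lemma pairTerm_nonneg {p : ℝ} (hp : p ∈ Set.Icc (0:ℝ) 1) (d : ℝ) : 0 ≤ pairTerm p d := by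
  unfold pairTerm
  have := sp_nonneg d; have := sp_nonneg (-d)
  have h1 := hp.1; have h2 := hp.2
  nlinarith

lemma pairTerm_ge {p : ℝ} (hp : p ∈ Set.Icc (0:ℝ) 1) (d : ℝ) :
    min p (1 - p) * |d| ≤ pairTerm p d := by
  unfold pairTerm
  have h0 := sp_nonneg d; have h1 := sp_nonneg (-d)
  have h2 := sp_ge_neg d; have h3 := sp_ge_neg (-d)
  have hmp : min p (1-p) ≤ p := min_le_left _ _
  have hmq : min p (1-p) ≤ 1 - p := min_le_right _ _
  have hm0 : 0 ≤ min p (1-p) := le_min hp.1 (by linarith [hp.2])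
  rcases le_total 0 d with hd | hd
  · rw [abs_of_nonneg hd]
    have b1 : min p (1-p) * sp d ≤ p * sp d := mul_le_mul_of_nonneg_right hmp h0
    have b2 : min p (1-p) * sp (-d) ≤ (1-p) * sp (-d) := mul_le_mul_of_nonneg_right hmq h1
    have b3 : min p (1-p) * d ≤ min p (1-p) * (sp d + sp (-d)) := by
      have : d ≤ sp d + sp (-d) := by simp at h3; linarith
      exact mul_le_mul_of_nonneg_left this hm0
    nlinarith
  · rw [abs_of_nonpos hd]
    have b1 : min p (1-p) * sp d ≤ p * sp d := mul_le_mul_of_nonneg_right hmp h0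
    have b2 : min p (1-p) * sp (-d) ≤ (1-p) * sp (-d) := mul_le_mul_of_nonneg_right hmq h1
    have b3 : min p (1-p) * (-d) ≤ min p (1-p) * (sp d + sp (-d)) := by
      have : -d ≤ sp d + sp (-d) := by linarith
      exact mul_le_mul_of_nonneg_left this hm0
    nlinarith

lemma pairTerm_midpoint (p x y : ℝ) :
    pairTerm p ((x + y)/2) ≤ (pairTerm p x + pairTerm p y)/2 := by
  rw [pairTerm_eq, pairTerm_eq, pairTerm_eq]
  have h := sp_strictConvexOn.convexOn.2 (Set.mem_univ x) (Set.mem_univ y)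
    (by norm_num : (0:ℝ) ≤ 1/2) (by norm_num : (0:ℝ) ≤ 1/2) (by norm_num)
  simp only [smul_eq_mul] at h
  have hx : (1/2 : ℝ) * x + (1/2 : ℝ) * y = (x+y)/2 := by ring
  rw [hx] at h
  linarith

lemma pairTerm_midpoint_lt (p : ℝ) {x y : ℝ} (hxy : x ≠ y) :
    pairTerm p ((x + y)/2) < (pairTerm p x + pairTerm p y)/2 := by
  rw [pairTerm_eq, pairTerm_eq, pairTerm_eq]
  have h := sp_strictConvexOn.2 (Set.mem_univ x) (Set.mem_univ y) hxy
    (by norm_num : (0:ℝ) < 1/2) (by norm_num : (0:ℝ) < 1/2) (by norm_num)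
  simp only [smul_eq_mul] at h
  have hx : (1/2 : ℝ) * x + (1/2 : ℝ) * y = (x+y)/2 := by ring
  rw [hx] at h
  linarith

lemma logistic_eq (d : ℝ) : logistic d = 1 - 1 / (Real.exp d + 1) := by
  unfold logistic
  rw [Real.exp_neg]
  have h := (Real.exp_pos d).ne'
  field_simp
  ring

/-- Gibbs inequality: `pairTerm (logistic c) ·` is minimized at `c`. -/
lemma pairTerm_gibbs (c d : ℝ) : pairTerm (logistic c) c ≤ pairTerm (logistic c) d := by
  set p := logistic c with hp
  have key : ∀ x, HasDerivAt (fun d => sp d + (1 - p) * d) (logistic x - p) x := by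
    intro x
    have h1 := (sp_hasDerivAt x).add ((hasDerivAt_id x).const_mul (1 - p))
    refine h1.congr_deriv ?_
    rw [logistic_eq]; ring
  have hderiv : deriv (fun d => sp d + (1 - p) * d) = fun x => logistic x - p :=
    funext fun x => (key x).deriv
  have hcont : Continuous (fun d => sp d + (1 - p) * d) :=
    continuous_iff_continuousAt.2 fun x => (key x).differentiableAt.continuousAt
  have hdiff : ∀ s : Set ℝ, DifferentiableOn ℝ (fun d => sp d + (1 - p) * d) s :=
    fun s x _ => (key x).differentiableAt.differentiableWithinAt
  rw [pairTerm_eq, pairTerm_eq]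
  rcases le_total c d with hcd | hcd
  · have hmono : MonotoneOn (fun d => sp d + (1 - p) * d) (Set.Ici c) := by
      refine monotoneOn_of_deriv_nonneg (convex_Ici c) hcont.continuousOn
        ((hdiff _).mono interior_subset) ?_
      intro x hx
      rw [interior_Ici] at hx
      rw [hderiv]
      have := logistic_strictMono hx
      simp only [← hp, sub_nonneg]
      exact this.le
    exact hmono (Set.self_mem_Ici) hcd hcd
  · have hanti : AntitoneOn (fun d => sp d + (1 - p) * d) (Set.Iic c) := by
      refine antitoneOn_of_deriv_nonpos (convex_Iic c) hcont.continuousOn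
        ((hdiff _).mono interior_subset) ?_
      intro x hx
      rw [interior_Iic] at hx
      rw [hderiv]
      have := logistic_strictMono hx
      simp only [← hp, sub_nonpos]
      exact this.le
    exact hanti hcd (Set.self_mem_Iic) hcd

lemma empObjective_eq {n : ℕ} (phat : Fin n → Fin n → ℝ) (θ : Fin n → ℝ) :
    empObjective phat θ =
      ∑ i : Fin n, ∑ j : Fin n,
        if i < j then pairTerm (phat i j) (θ j - θ i) else 0 := by
  unfold empObjective
  refine Finset.sum_congr rfl fun i _ => Finset.sum_congr rfl fun j _ => ?_
  by_cases h : i < j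
  · simp only [if_pos h]
    rw [show θ i - θ j = -(θ j - θ i) by ring, log_logistic, log_logistic]
    unfold pairTerm; ring
  · simp [h]

lemma convexOn_sum_univ {ι E : Type*} [Fintype ι] [AddCommGroup E] [Module ℝ E]
    {f : ι → E → ℝ} (h : ∀ i, ConvexOn ℝ Set.univ (f i)) :
    ConvexOn ℝ Set.univ (fun x => ∑ i, f i x) := by
  classical
  induction (Finset.univ : Finset ι) using Finset.cons_induction with
  | empty => simpa using convexOn_const (0:ℝ) convex_univ
  | cons a t ha ih =>
    simp only [Finset.sum_cons]
    exact (h a).add ih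

lemma convexOn_pairTerm (p : ℝ) : ConvexOn ℝ Set.univ (pairTerm p) := by
  have h : pairTerm p = fun d => sp d + (1-p)*d := funext (pairTerm_eq p)
  rw [h]
  refine sp_strictConvexOn.convexOn.add ⟨convex_univ, ?_⟩
  intro x _ y _ a b _ _ _
  exact le_of_eq (by simp [smul_eq_mul]; ring)

lemma convexOn_pair {n : ℕ} (p : ℝ) (i j : Fin n) :
    ConvexOn ℝ Set.univ (fun θ : Fin n → ℝ => pairTerm p (θ j - θ i)) := by
  refine ⟨convex_univ, ?_⟩
  intro x _ y _ a b ha hb hab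
  have hs : (a • x + b • y) j - (a • x + b • y) i
      = a * (x j - x i) + b * (y j - y i) := by
    simp only [Pi.add_apply, Pi.smul_apply, smul_eq_mul]; ring
  simp only [hs, smul_eq_mul]
  have := (convexOn_pairTerm p).2 (Set.mem_univ (x j - x i)) (Set.mem_univ (y j - y i))
    ha hb hab
  simpa [smul_eq_mul] using this

lemma convexOn_empObjective {n : ℕ} (phat : Fin n → Fin n → ℝ) :
    ConvexOn ℝ Set.univ (empObjective phat) := by
  have h : empObjective phat = fun θ => ∑ i : Fin n, ∑ j : Fin n,
      if i < j then pairTerm (phat i j) (θ j - θ i) else 0 :=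
    funext (empObjective_eq phat)
  rw [h]
  refine convexOn_sum_univ fun i => convexOn_sum_univ fun j => ?_
  by_cases hij : i < j
  · simpa [hij] using convexOn_pair (phat i j) i j
  · simpa [hij] using convexOn_const (0:ℝ) convex_univ

lemma continuous_empObjective {n : ℕ} (phat : Fin n → Fin n → ℝ) :
    Continuous (empObjective phat) := by
  unfold empObjective
  refine continuous_finset_sum _ fun i _ => continuous_finset_sum _ fun j _ => ?_
  by_cases hij : i < j
  · simp only [if_pos hij]
    have hlog : ∀ k l : Fin n, Continuous (fun θ : Fin n → ℝ => Real.log (logistic (θ k - θ l))) := by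
      intro k l
      have : (fun θ : Fin n → ℝ => Real.log (logistic (θ k - θ l)))
          = fun θ => -sp (θ k - θ l) := funext fun θ => log_logistic _
      rw [this]
      exact (sp_continuous.comp ((continuous_apply k).sub (continuous_apply l))).neg
    exact ((continuous_const.mul (hlog j i))).sub (continuous_const.mul (hlog i j))
  · simp only [if_neg hij]; exact continuous_const

lemma empObjective_term_nonneg {n : ℕ} {phat : Fin n → Fin n → ℝ}
    (hphat : ∀ i j : Fin n, i < j → phat i j ∈ Set.Ioo (0:ℝ) 1) (θ : Fin n → ℝ)
    (i j : Fin n) :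
    0 ≤ if i < j then pairTerm (phat i j) (θ j - θ i) else 0 := by
  by_cases hij : i < j
  · simp only [if_pos hij]
    exact pairTerm_nonneg ⟨(hphat i j hij).1.le, (hphat i j hij).2.le⟩ _
  · simp [hij]

lemma empObjective_ge {n : ℕ} {phat : Fin n → Fin n → ℝ}
    (hphat : ∀ i j : Fin n, i < j → phat i j ∈ Set.Ioo (0:ℝ) 1) (θ : Fin n → ℝ)
    {i j : Fin n} (hij : i < j) :
    min (phat i j) (1 - phat i j) * |θ j - θ i| ≤ empObjective phat θ := by
  rw [empObjective_eq]
  calc min (phat i j) (1 - phat i j) * |θ j - θ i|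
      ≤ pairTerm (phat i j) (θ j - θ i) :=
        pairTerm_ge ⟨(hphat i j hij).1.le, (hphat i j hij).2.le⟩ _
    _ = (if i < j then pairTerm (phat i j) (θ j - θ i) else 0) := by rw [if_pos hij]
    _ ≤ ∑ l : Fin n, (if i < l then pairTerm (phat i l) (θ l - θ i) else 0) :=
        Finset.single_le_sum (fun l _ => empObjective_term_nonneg hphat θ i l)
          (Finset.mem_univ j)
    _ ≤ ∑ k : Fin n, ∑ l : Fin n, (if k < l then pairTerm (phat k l) (θ l - θ k) else 0) :=
        Finset.single_le_sum
          (fun k _ => Finset.sum_nonneg fun l _ => empObjective_term_nonneg hphat θ k l)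
          (Finset.mem_univ i)

lemma exists_pair_diff_ne {n : ℕ} (hn : 2 ≤ n) {θ η : Fin n → ℝ}
    (hθ : (∑ i, θ i) = 0) (hη : (∑ i, η i) = 0) (hne : θ ≠ η) :
    ∃ i j : Fin n, i < j ∧ θ j - θ i ≠ η j - η i := by
  by_contra h
  push_neg at h
  apply hne
  have hpos : 0 < n := by omega
  set i0 : Fin n := ⟨0, hpos⟩ with hi0
  have hconst : ∀ k : Fin n, θ k - η k = θ i0 - η i0 := by
    intro k
    rcases eq_or_lt_of_le (show i0 ≤ k from Fin.le_def.2 (Nat.zero_le _)) with hk | hk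
    · rw [← hk]
    · have := h i0 k hk; linarith
  have hsum : ∑ k : Fin n, (θ k - η k) = 0 := by
    rw [Finset.sum_sub_distrib, hθ, hη, sub_zero]
  rw [Finset.sum_congr rfl (fun k _ => hconst k), Finset.sum_const,
    Finset.card_univ, Fintype.card_fin, nsmul_eq_mul] at hsum
  have hc : θ i0 - η i0 = 0 := by
    have : (n : ℝ) ≠ 0 := Nat.cast_ne_zero.2 (by omega)
    exact (mul_eq_zero.1 hsum).resolve_left this
  funext k
  have := hconst k
  rw [hc] at this
  linarith

lemma empObjective_midpoint_lt {n : ℕ} (hn : 2 ≤ n) (phat : Fin n → Fin n → ℝ)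
    {θ η : Fin n → ℝ} (hθ : (∑ i, θ i) = 0) (hη : (∑ i, η i) = 0) (hne : θ ≠ η) :
    empObjective phat (fun i => (θ i + η i)/2)
      < (empObjective phat θ + empObjective phat η)/2 := by
  obtain ⟨i0, j0, hij0, hd0⟩ := exists_pair_diff_ne hn hθ hη hne
  set μ : Fin n → ℝ := fun i => (θ i + η i)/2 with hμ
  have hdiff : ∀ i j : Fin n, μ j - μ i = ((θ j - θ i) + (η j - η i))/2 := by
    intro i j; simp only [hμ]; ring
  have key : ∀ i j : Fin n,
      (if i < j then pairTerm (phat i j) (μ j - μ i) else 0)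
        ≤ ((if i < j then pairTerm (phat i j) (θ j - θ i) else 0)
          + (if i < j then pairTerm (phat i j) (η j - η i) else 0))/2 := by
    intro i j
    by_cases hij : i < j
    · simp only [if_pos hij, hdiff]
      exact pairTerm_midpoint _ _ _
    · simp [hij]
  have keystrict :
      (if i0 < j0 then pairTerm (phat i0 j0) (μ j0 - μ i0) else 0)
        < ((if i0 < j0 then pairTerm (phat i0 j0) (θ j0 - θ i0) else 0)
          + (if i0 < j0 then pairTerm (phat i0 j0) (η j0 - η i0) else 0))/2 := by
    simp only [if_pos hij0, hdiff]
    exact pairTerm_midpoint_lt _ hd0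
  rw [empObjective_eq, empObjective_eq, empObjective_eq]
  have hrhs : (∑ i : Fin n, ∑ j : Fin n, (if i < j then pairTerm (phat i j) (θ j - θ i) else 0)
      + ∑ i : Fin n, ∑ j : Fin n, (if i < j then pairTerm (phat i j) (η j - η i) else 0))/2
      = ∑ i : Fin n, ∑ j : Fin n,
        ((if i < j then pairTerm (phat i j) (θ j - θ i) else 0)
          + (if i < j then pairTerm (phat i j) (η j - η i) else 0))/2 := by
    rw [← Finset.sum_add_distrib, Finset.sum_div]
    refine Finset.sum_congr rfl fun i _ => ?_
    rw [← Finset.sum_add_distrib, Finset.sum_div]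
  rw [hrhs]
  refine Finset.sum_lt_sum (fun i _ => Finset.sum_le_sum fun j _ => key i j) ⟨i0, Finset.mem_univ i0, ?_⟩
  exact Finset.sum_lt_sum (fun j _ => key i0 j) ⟨j0, Finset.mem_univ j0, keystrict⟩

lemma empObjective_exists_min {n : ℕ} (hn : 2 ≤ n) (phat : Fin n → Fin n → ℝ)
    (hphat : ∀ i j : Fin n, i < j → phat i j ∈ Set.Ioo (0 : ℝ) 1) :
    ∃ θ : Fin n → ℝ, (∑ i, θ i) = 0 ∧
      ∀ η : Fin n → ℝ, (∑ i, η i) = 0 → empObjective phat θ ≤ empObjective phat η := by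
  classical
  have hpos : 0 < n := by omega
  have hne : Nonempty (Fin n) := ⟨⟨0, hpos⟩⟩
  set i0 : Fin n := ⟨0, hpos⟩
  set j0 : Fin n := ⟨1, by omega⟩
  have hij0 : i0 < j0 := by simp [i0, j0, Fin.lt_def]
  set L := empObjective phat with hL
  set P : Finset (Fin n × Fin n) := Finset.univ.filter (fun q => q.1 < q.2) with hP
  have hPne : P.Nonempty := ⟨(i0, j0), by simp [hP, hij0]⟩
  set m : ℝ := P.inf' hPne (fun q => min (phat q.1 q.2) (1 - phat q.1 q.2)) with hm
  have hm_pos : 0 < m := by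
    rw [hm, Finset.lt_inf'_iff]
    intro q hq
    have hq' : q.1 < q.2 := by simpa [hP] using hq
    have := hphat q.1 q.2 hq'
    exact lt_min this.1 (by linarith [this.2])
  have hm_le : ∀ i j : Fin n, i < j → m ≤ min (phat i j) (1 - phat i j) := by
    intro i j hij
    refine Finset.inf'_le (fun q : Fin n × Fin n => min (phat q.1 q.2) (1 - phat q.1 q.2)) (b := (i, j)) ?_
    simp only [hP, Finset.mem_filter, Finset.mem_univ, true_and]
    exact hij
  have hbound : ∀ (θ : Fin n → ℝ) (i j : Fin n), i < j → m * |θ j - θ i| ≤ L θ := by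
    intro θ i j hij
    calc m * |θ j - θ i| ≤ min (phat i j) (1 - phat i j) * |θ j - θ i| :=
          mul_le_mul_of_nonneg_right (hm_le i j hij) (abs_nonneg _)
      _ ≤ L θ := empObjective_ge hphat θ hij
  set c0 : ℝ := L 0 with hc0
  have hc0_nonneg : 0 ≤ c0 := by
    have h := hbound 0 i0 j0 hij0
    simp only [Pi.zero_apply, sub_zero, abs_zero, mul_zero] at h
    exact h
  set K : Set (Fin n → ℝ) := {θ | (∑ i, θ i) = 0} ∩ {θ | L θ ≤ c0} with hK
  have hKclosed : IsClosed K := by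
    refine IsClosed.inter ?_ (isClosed_le (continuous_empObjective phat) continuous_const)
    exact isClosed_eq (continuous_finset_sum _ fun i _ => continuous_apply i) continuous_const
  have h0K : (0 : Fin n → ℝ) ∈ K := by
    constructor
    · simp
    · show L 0 ≤ c0
      exact le_rfl
  have hKbdd : ∀ θ ∈ K, ∀ i : Fin n, |θ i| ≤ c0 / m := by
    rintro θ ⟨hθV, hθc⟩ i
    have hθV' : (∑ k, θ k) = 0 := hθV
    have hθc' : L θ ≤ c0 := hθc
    obtain ⟨a, ha⟩ := Finite.exists_max θ
    obtain ⟨b, hb⟩ := Finite.exists_min θ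
    have hbz : θ b ≤ 0 := by
      have h1 : Finset.univ.card • θ b ≤ ∑ k : Fin n, θ k :=
        Finset.card_nsmul_le_sum _ _ _ (fun k _ => hb k)
      rw [hθV', Finset.card_univ, Fintype.card_fin, nsmul_eq_mul] at h1
      nlinarith [show (0:ℝ) < (n:ℝ) from Nat.cast_pos.2 hpos]
    have haz : 0 ≤ θ a := by
      have h1 : ∑ k : Fin n, θ k ≤ Finset.univ.card • θ a :=
        Finset.sum_le_card_nsmul _ _ _ (fun k _ => ha k)
      rw [hθV', Finset.card_univ, Fintype.card_fin, nsmul_eq_mul] at h1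
      nlinarith [show (0:ℝ) < (n:ℝ) from Nat.cast_pos.2 hpos]
    have hab : m * (θ a - θ b) ≤ c0 := by
      rcases lt_trichotomy a b with h | h | h
      · have := hbound θ a b h
        rw [abs_of_nonpos (by linarith [ha b, hb a])] at this
        have : m * (θ a - θ b) ≤ L θ := by rw [neg_sub] at this; linarith
        linarith
      · rw [h]; simp only [sub_self, mul_zero]; exact hc0_nonneg
      · have := hbound θ b a h
        rw [abs_of_nonneg (by linarith [ha b, hb a])] at this
        linarith
    have hab' : θ a - θ b ≤ c0 / m := by
      rw [le_div_iff₀ hm_pos]; linarith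
    rw [abs_le]
    constructor
    · have : θ b ≤ θ i := hb i
      nlinarith
    · have : θ i ≤ θ a := ha i
      nlinarith
  have hKcompact : IsCompact K := by
    have hsub : K ⊆ Metric.closedBall 0 (c0 / m) := by
      intro θ hθ
      rw [Metric.mem_closedBall, dist_zero_right]
      rw [pi_norm_le_iff_of_nonneg (div_nonneg hc0_nonneg hm_pos.le)]
      intro i
      rw [Real.norm_eq_abs]
      exact hKbdd θ hθ i
    exact (isCompact_closedBall _ _).of_isClosed_subset hKclosed hsub
  obtain ⟨θs, hθsK, hmin⟩ :=
    hKcompact.exists_isMinOn ⟨0, h0K⟩ (continuous_empObjective phat).continuousOn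
  refine ⟨θs, hθsK.1, fun η hη => ?_⟩
  by_cases hηc : L η ≤ c0
  · exact hmin ⟨hη, hηc⟩
  · have h1 : L θs ≤ c0 := hmin h0K
    push_neg at hηc
    linarith

lemma empObjective_min_of_realizable {n : ℕ} (phat : Fin n → Fin n → ℝ)
    (u : Fin n → ℝ)
    (hreal : ∀ i j : Fin n, i < j → phat i j = logistic (u j - u i)) :
    ∀ η : Fin n → ℝ, empObjective phat u ≤ empObjective phat η := by
  intro η
  rw [empObjective_eq, empObjective_eq]
  refine Finset.sum_le_sum fun i _ => Finset.sum_le_sum fun j _ => ?_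
  by_cases hij : i < j
  · simp only [if_pos hij, hreal i j hij]
    exact pairTerm_gibbs (u j - u i) (η j - η i)
  · simp [hij]

/-- existence and uniqueness of the empirical M-estimator: if
`n ≥ 2` and `p̂_ij ∈ (0,1)` for all `i < j`, then `𝓛_n` is convex on `ℝⁿ` and has
a unique minimizer over the centered hyperplane `{θ : Σᵢ θᵢ = 0}`; moreover, if
`p̂_ij = σ(u_j - u_i)` for a centered `u`, this minimizer equals `u`. -/
theorem empObjective_exists_unique_minimizer {n : ℕ} (hn : 2 ≤ n)
    (phat : Fin n → Fin n → ℝ)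
    (hphat : ∀ i j : Fin n, i < j → phat i j ∈ Set.Ioo (0 : ℝ) 1) :
    ConvexOn ℝ Set.univ (empObjective phat) ∧
    (∃! θ : Fin n → ℝ, (∑ i, θ i) = 0 ∧
      ∀ η : Fin n → ℝ, (∑ i, η i) = 0 → empObjective phat θ ≤ empObjective phat η) ∧
    (∀ u : Fin n → ℝ, (∑ i, u i) = 0 →
      (∀ i j : Fin n, i < j → phat i j = logistic (u j - u i)) →
      ∀ θ : Fin n → ℝ, ((∑ i, θ i) = 0 ∧
        ∀ η : Fin n → ℝ, (∑ i, η i) = 0 → empObjective phat θ ≤ empObjective phat η) →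
      θ = u) := by
  have huniq : ∀ θ₁ θ₂ : Fin n → ℝ,
      ((∑ i, θ₁ i) = 0 ∧ ∀ η : Fin n → ℝ, (∑ i, η i) = 0 →
        empObjective phat θ₁ ≤ empObjective phat η) →
      ((∑ i, θ₂ i) = 0 ∧ ∀ η : Fin n → ℝ, (∑ i, η i) = 0 →
        empObjective phat θ₂ ≤ empObjective phat η) →
      θ₁ = θ₂ := by
    intro θ₁ θ₂ h₁ h₂
    by_contra hne
    have hμsum : (∑ i, (fun i => (θ₁ i + θ₂ i)/2) i) = 0 := by
      simp only
      rw [← Finset.sum_div, Finset.sum_add_distrib, h₁.1, h₂.1]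
      norm_num
    have hlt := empObjective_midpoint_lt hn phat h₁.1 h₂.1 hne
    have h12 : empObjective phat θ₁ ≤ empObjective phat θ₂ := h₁.2 θ₂ h₂.1
    have h21 : empObjective phat θ₂ ≤ empObjective phat θ₁ := h₂.2 θ₁ h₁.1
    have hmin := h₁.2 _ hμsum
    linarith
  refine ⟨convexOn_empObjective phat, ?_, ?_⟩
  · obtain ⟨θs, hθs⟩ := empObjective_exists_min hn phat hphat
    exact ⟨θs, hθs, fun θ hθ => huniq θ θs hθ hθs⟩
  · intro u hu hreal θ hθ
    refine huniq θ u hθ ⟨hu, fun η _ => ?_⟩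
    exact empObjective_min_of_realizable phat u hreal η
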